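/- For any Dynkin quiver Q on Δ, the map φ_Q : Δ̂₀ → Φ⁺×ℤ is a bijection. -/

import Mathlib

noncomputable section

open scoped BigOperators

/-- A finite Cartan datum: a connected Dynkin diagram of finite type with vertex set `I`,
Cartan matrix `c`, symmetrizers `d`, simple roots `α`, fundamental weights `ϖ`, an invariant
symmetric bilinear form `form` (normalized so that `(α,α) = 2` for short roots, i.e. some
`d i = 1`), simple reflections `s` acting on the weight lattice `V`, the set of positive
roots `Φ`, the longest element `w0` (with induced involution `star`), and Coxeter number
`hcox`. -/
structure SSDatum where
  I : Type
  [fintypeI : Fintype I]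
  [decEqI : DecidableEq I]
  [nonemptyI : Nonempty I]
  V : Type
  [acgV : AddCommGroup V]
  [modV : Module ℚ V]
  [decEqV : DecidableEq V]
  c : I → I → ℤ
  d : I → ℤ
  α : I → V
  ϖ : I → V
  form : V → V → ℚ
  s : I → (V ≃ₗ[ℚ] V)
  Φ : Finset V
  w0 : V ≃ₗ[ℚ] V
  star : I → I
  hcox : ℤ
  c_diag : ∀ i, c i i = 2
  c_nonpos : ∀ i j, i ≠ j → c i j ≤ 0
  c_zero_sym : ∀ i j, c i j = 0 → c j i = 0
  connected : ∀ i j, Relation.ReflTransGen (fun a b => a ≠ b ∧ c a b ≠ 0) i j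
  d_pos : ∀ i, 0 < d i
  d_one : ∃ i, d i = 1
  d_symmetrize : ∀ i j, d i * c i j = d j * c j i
  exists_basis : ∃ b : Module.Basis I ℚ V, ∀ i, b i = ϖ i
  form_symm : ∀ x y, form x y = form y x
  form_add : ∀ x y z, form (x + y) z = form x z + form y z
  form_smul : ∀ (a : ℚ) (x y), form (a • x) y = a * form x y
  form_alpha : ∀ i j, form (α i) (α j) = (d i : ℚ) * (c i j : ℚ)
  form_alpha_omega : ∀ i j, form (α i) (ϖ j) = if i = j then (d i : ℚ) else 0
  form_inv : ∀ i x y, form (s i x) (s i y) = form x y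
  s_omega : ∀ i j, s i (ϖ j) = ϖ j - (if i = j then (1 : ℚ) else 0) • α i
  s_alpha : ∀ i j, s i (α j) = α j - ((c i j : ℚ)) • α i
  alpha_mem : ∀ i, α i ∈ Φ
  zero_not_mem : (0 : V) ∉ Φ
  pos_comb : ∀ β ∈ Φ, ∃ f : I → ℕ, β = ∑ i, (f i : ℚ) • α i
  s_perm : ∀ i, ∀ β ∈ Φ, β ≠ α i → s i β ∈ Φ
  w0_mem : w0 ∈ Subgroup.closure (Set.range s)
  w0_alpha : ∀ i, w0 (α i) = - α (star i)
  star_invol : ∀ i, star (star i) = i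
  w0_neg : ∀ β ∈ Φ, -(w0 β) ∈ Φ
  hcox_pos : 0 < hcox
  hcox_card : hcox * (Fintype.card I : ℤ) = 2 * (Φ.card : ℤ)

attribute [instance] SSDatum.fintypeI SSDatum.decEqI SSDatum.nonemptyI
attribute [instance] SSDatum.acgV SSDatum.modV SSDatum.decEqV

namespace SSDatum

variable (D : SSDatum)

/-- The underlying graph of the Dynkin diagram. -/
def graph : SimpleGraph D.I where
  Adj a b := a ≠ b ∧ D.c a b ≠ 0
  symm := by
    constructor
    intro a b h
    exact ⟨h.1.symm, fun hz => h.2 (D.c_zero_sym b a hz)⟩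
  loopless := by
    constructor
    intro a h
    exact h.1 rfl

/-- The graph distance `d(i,j)` in the Dynkin diagram. -/
def dist (i j : D.I) : ℕ := D.graph.dist i j

/-- The product `s_{i_1} ⋯ s_{i_r}` of simple reflections along a word. -/
def wordProd (l : List D.I) : D.V ≃ₗ[ℚ] D.V := (l.map D.s).prod

/-- The length of an element of the Weyl group. -/
def len (w : D.V ≃ₗ[ℚ] D.V) : ℕ :=
  sInf {n | ∃ l : List D.I, l.length = n ∧ D.wordProd l = w}

/-- A word is a reduced expression of its product. -/
def IsReducedWord (l : List D.I) : Prop := l.length = D.len (D.wordProd l)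

/-- The map `ŵ` on `Φ⁺ × ℤ`:
`ŵ(β,k) = (wβ, k)` if `wβ ∈ Φ⁺` and `ŵ(β,k) = (−wβ, k−1)` otherwise. -/
def hat (w : D.V ≃ₗ[ℚ] D.V) (x : D.V × ℤ) : D.V × ℤ :=
  if w x.1 ∈ D.Φ then (w x.1, x.2) else (-(w x.1), x.2 - 1)

/-- The map `(ŵ)⁻¹` on `Φ⁺ × ℤ`. -/
def hatInv (w : D.V ≃ₗ[ℚ] D.V) (x : D.V × ℤ) : D.V × ℤ :=
  if w⁻¹ x.1 ∈ D.Φ then (w⁻¹ x.1, x.2) else (-(w⁻¹ x.1), x.2 + 1)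

/-- `ξ` is a height function on the Dynkin diagram. -/
def IsHeight (ξ : D.I → ℤ) : Prop :=
  ∀ i j, D.dist i j = 1 → ξ i - ξ j = 1 ∨ ξ j - ξ i = 1

/-- `i` is a source of the Dynkin quiver `(Δ, ξ)`. -/
def IsSource (ξ : D.I → ℤ) (i : D.I) : Prop :=
  ∀ j, D.dist i j = 1 → ξ j < ξ i

/-- The height function of the reflected quiver `s_i Q`. -/
def rHeight (ξ : D.I → ℤ) (i : D.I) : D.I → ℤ :=
  fun j => if j = i then ξ i - 2 else ξ j

/-- A sequence in `I` is adapted to the Dynkin quiver `(Δ, ξ)`. -/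
def Adapted (ξ : D.I → ℤ) : List D.I → Prop
  | [] => True
  | i :: l => D.IsSource ξ i ∧ Adapted (D.rHeight ξ i) l

/-- `τ` is the Coxeter element `τ_Q` attached to the Dynkin quiver with height function `ξ`:
it has a `Q`-adapted reduced expression in which each simple reflection occurs exactly once. -/
def IsCoxeterFor (ξ : D.I → ℤ) (τ : D.V ≃ₗ[ℚ] D.V) : Prop :=
  ∃ l : List D.I, l.Nodup ∧ (∀ i, i ∈ l) ∧ D.Adapted ξ l ∧ D.wordProd l = τ

/-- `γ_i^Q = (1 - τ_Q) ϖ_i`. -/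
def gam (τ : D.V ≃ₗ[ℚ] D.V) (i : D.I) : D.V := D.ϖ i - τ (D.ϖ i)

/-- The map `φ_Q : Δ̂₀ → Φ⁺ × ℤ`, defined inductively from
`φ_Q(i, ξ_i) = (γ_i^Q, 0)` by applying `(τ̂_Q)^{∓1}` when moving `p ↦ p ± 2`. -/
def phi (ξ : D.I → ℤ) (τ : D.V ≃ₗ[ℚ] D.V) (i : D.I) (p : ℤ) : D.V × ℤ :=
  if p ≤ ξ i then (D.hat τ)^[((ξ i - p) / 2).toNat] (D.gam τ i, 0)
  else (D.hatInv τ)^[((p - ξ i) / 2).toNat] (D.gam τ i, 0)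

/-- The function `η_{i,j}^Q : ℤ → ℚ`. -/
def eta (ξ : D.I → ℤ) (τ : D.V ≃ₗ[ℚ] D.V) (i j : D.I) (u : ℤ) : ℚ :=
  if (u + ξ j - ξ i - 1) % 2 = 0 then
    D.form (D.ϖ i) ((τ ^ ((u + ξ j - ξ i - 1) / 2)) (D.gam τ j))
  else 0

end SSDatum

/-- The variable `t` of the field of formal Laurent series `ℚ((t))`. -/
def tq : LaurentSeries ℚ := HahnSeries.single 1 1

namespace SSDatum

variable (D : SSDatum)

/-- The symmetrized `t`-quantized Cartan matrix `B(t) = C(t) · D⁻¹`, where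
`C(t)_{i,i} = t + t⁻¹` and `C(t)_{i,j} = c_{i,j}` for `i ≠ j`. -/
def Bt : Matrix D.I D.I (LaurentSeries ℚ) :=
  Matrix.of fun i j =>
    (if i = j then tq + tq⁻¹ else (D.c i j : LaurentSeries ℚ)) * ((D.d j : LaurentSeries ℚ))⁻¹

/-- `b̃_{i,j}(u)`: the coefficient of `t^u` in the Laurent expansion of `(B(t)⁻¹)_{i,j}`. -/
def btilde (i j : D.I) (u : ℤ) : ℚ := ((D.Bt)⁻¹ i j).coeff u

/-- `Ñ(i,p;j,s) = b̃_{i,j}(p−s−1) − b̃_{i,j}(s−p−1) − b̃_{i,j}(p−s+1) + b̃_{i,j}(s−p+1)`. -/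
def Ncal (i : D.I) (p : ℤ) (j : D.I) (q : ℤ) : ℚ :=
  D.btilde i j (p - q - 1) - D.btilde i j (q - p - 1)
    - D.btilde i j (p - q + 1) + D.btilde i j (q - p + 1)

end SSDatum

/-! ### Auxiliary development for the proof of `stmt4`. -/

namespace SSDatum

variable (D : SSDatum)

/-- The basis of fundamental weights. -/
def bas : Module.Basis D.I ℚ D.V := D.exists_basis.choose

lemma bas_eq (i : D.I) : D.bas i = D.ϖ i := D.exists_basis.choose_spec i

lemma form_zero_left (y : D.V) : D.form 0 y = 0 := by
  have := D.form_smul 0 0 y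
  simpa using this

lemma form_neg_left (x y : D.V) : D.form (-x) y = - D.form x y := by
  have := D.form_smul (-1) x y
  simpa using this

lemma form_sub_left (x x' y : D.V) : D.form (x - x') y = D.form x y - D.form x' y := by
  rw [sub_eq_add_neg, D.form_add, D.form_neg_left, sub_eq_add_neg]

lemma form_sum_left {ι : Type*} (s : Finset ι) (f : ι → D.V) (y : D.V) :
    D.form (∑ i ∈ s, f i) y = ∑ i ∈ s, D.form (f i) y := by
  classical
  induction s using Finset.induction_on with
  | empty => simpa using D.form_zero_left y
  | insert _ _ h ih => rw [Finset.sum_insert h, Finset.sum_insert h, D.form_add, ih]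

lemma coef_exists {β : D.V} (hβ : β ∈ D.Φ) :
    ∃ f : D.I → ℕ, ∀ j, D.form β (D.ϖ j) = (f j : ℚ) * D.d j := by
  obtain ⟨f, hf⟩ := D.pos_comb β hβ
  refine ⟨f, fun j => ?_⟩
  rw [hf, D.form_sum_left]
  rw [Finset.sum_eq_single j]
  · rw [D.form_smul, D.form_alpha_omega]; simp
  · intro b _ hb
    rw [D.form_smul, D.form_alpha_omega]
    simp [hb]
  · simp

lemma coef_nonneg {β : D.V} (hβ : β ∈ D.Φ) (j : D.I) : 0 ≤ D.form β (D.ϖ j) := by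
  obtain ⟨f, hf⟩ := D.coef_exists hβ
  rw [hf j]
  have := D.d_pos j
  positivity

lemma eq_zero_of_coef {β : D.V} (hβ : β ∈ D.Φ) (h : ∀ j, D.form β (D.ϖ j) = 0) : β = 0 := by
  obtain ⟨f, hf⟩ := D.coef_exists hβ
  obtain ⟨g, hg⟩ := D.pos_comb β hβ
  have hf0 : ∀ j, D.form β (D.ϖ j) = (g j : ℚ) * D.d j := by
    intro j
    rw [hg, D.form_sum_left, Finset.sum_eq_single j]
    · rw [D.form_smul, D.form_alpha_omega]; simp
    · intro b _ hb
      rw [D.form_smul, D.form_alpha_omega]; simp [hb]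
    · simp
  have : ∀ j, (g j : ℚ) = 0 := by
    intro j
    have hd : (D.d j : ℚ) ≠ 0 := by
      have := D.d_pos j; exact_mod_cast this.ne'
    have := (hf0 j).symm.trans (h j)
    exact (mul_eq_zero.mp this).resolve_right hd
  rw [hg]
  refine Finset.sum_eq_zero fun j _ => ?_
  rw [this j, zero_smul]

lemma mem_ne_zero {β : D.V} (hβ : β ∈ D.Φ) : β ≠ 0 := fun h => D.zero_not_mem (h ▸ hβ)

lemma neg_not_mem {β : D.V} (hβ : β ∈ D.Φ) : -β ∉ D.Φ := by
  intro hm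
  have h0 : ∀ j, D.form β (D.ϖ j) = 0 := by
    intro j
    have h1 := D.coef_nonneg hβ j
    have h2 := D.coef_nonneg hm j
    rw [D.form_neg_left] at h2
    linarith
  exact D.mem_ne_zero hβ (D.eq_zero_of_coef hβ h0)

lemma s_apply (i : D.I) (x : D.V) : D.s i x = x - (D.bas.repr x i : ℚ) • D.α i := by
  have h : (D.s i).toLinearMap =
      LinearMap.id - (LinearMap.toSpanSingleton ℚ D.V (D.α i)).comp (D.bas.coord i) := by
    refine D.bas.ext fun j => ?_
    simp only [LinearEquiv.coe_coe, LinearMap.sub_apply, LinearMap.id_apply,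
      LinearMap.comp_apply, Module.Basis.coord_apply, Module.Basis.repr_self, LinearMap.toSpanSingleton_apply]
    rw [D.bas_eq, D.s_omega]
    rw [Finsupp.single_apply]
    by_cases hij : i = j
    · subst hij; simp
    · simp [hij, Ne.symm hij]
  have := congrArg (fun f => f x) h
  simpa [LinearMap.toSpanSingleton_apply] using this

lemma s_mul_self (i : D.I) : D.s i * D.s i = 1 := by
  ext x
  show D.s i (D.s i x) = x
  have h2 : D.s i (D.α i) = - D.α i := by
    rw [D.s_alpha, D.c_diag]
    rw [show ((2:ℤ):ℚ) = 2 by norm_num]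
    rw [two_smul]
    abel
  rw [D.s_apply i x, map_sub, map_smul, h2, D.s_apply i x]
  simp

lemma s_inv (i : D.I) : (D.s i)⁻¹ = D.s i := inv_eq_of_mul_eq_one_left (D.s_mul_self i)

lemma s_s_apply (i : D.I) (x : D.V) : D.s i (D.s i x) = x := by
  have := congrArg (fun f => f x) (D.s_mul_self i)
  simpa using this

lemma s_alpha_self (i : D.I) : D.s i (D.α i) = - D.α i := by
  rw [D.s_alpha, D.c_diag]
  rw [show ((2:ℤ):ℚ) = 2 by norm_num, two_smul]
  abel

lemma s_fixes_omega {i j : D.I} (h : i ≠ j) : D.s i (D.ϖ j) = D.ϖ j := by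
  rw [D.s_omega]; simp [h]

lemma form_s_omega {i j : D.I} (h : i ≠ j) (x : D.V) :
    D.form (D.s i x) (D.ϖ j) = D.form x (D.ϖ j) := by
  rw [D.s_apply, D.form_sub_left, D.form_smul, D.form_alpha_omega]
  simp [h]

lemma wordProd_nil : D.wordProd [] = 1 := rfl

lemma wordProd_cons (i : D.I) (l : List D.I) :
    D.wordProd (i :: l) = D.s i * D.wordProd l := by
  simp [wordProd]

lemma wordProd_append (l₁ l₂ : List D.I) :
    D.wordProd (l₁ ++ l₂) = D.wordProd l₁ * D.wordProd l₂ := by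
  simp [wordProd]

lemma wordProd_singleton (i : D.I) : D.wordProd [i] = D.s i := by
  simp [wordProd]

lemma wordProd_reverse_mul (l : List D.I) :
    D.wordProd l.reverse * D.wordProd l = 1 := by
  induction l with
  | nil => simp [wordProd]
  | cons i l ih =>
    rw [List.reverse_cons, D.wordProd_append, D.wordProd_singleton, D.wordProd_cons]
    calc D.wordProd l.reverse * D.s i * (D.s i * D.wordProd l)
        = D.wordProd l.reverse * (D.s i * D.s i) * D.wordProd l := by
          simp [mul_assoc]
      _ = 1 := by rw [D.s_mul_self]; simpa using ih

lemma wordProd_inv (l : List D.I) : (D.wordProd l)⁻¹ = D.wordProd l.reverse :=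
  inv_eq_of_mul_eq_one_left (D.wordProd_reverse_mul l)

/-- `β` is a root (positive or negative). -/
def IsRootV (β : D.V) : Prop := β ∈ D.Φ ∨ -β ∈ D.Φ

lemma s_root {β : D.V} (i : D.I) (hβ : D.IsRootV β) : D.IsRootV (D.s i β) := by
  have key : ∀ γ ∈ D.Φ, D.IsRootV (D.s i γ) := by
    intro γ hγ
    by_cases h : γ = D.α i
    · subst h
      right
      rw [D.s_alpha_self, neg_neg]
      exact D.alpha_mem i
    · exact Or.inl (D.s_perm i γ hγ h)
  rcases hβ with h | h
  · exact key β h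
  · rcases key _ h with h' | h'
    · right
      rw [show -D.s i β = D.s i (-β) by rw [map_neg]]
      exact h'
    · left
      rw [map_neg, neg_neg] at h'
      exact h'

lemma wordProd_root {β : D.V} (l : List D.I) (hβ : D.IsRootV β) :
    D.IsRootV (D.wordProd l β) := by
  induction l with
  | nil => simpa [wordProd] using hβ
  | cons i l ih =>
    rw [D.wordProd_cons]
    have := D.s_root i ih
    simpa using this

lemma chain_pos (l : List D.I) (i : D.I) (hi : i ∉ l) :
    D.wordProd l (D.α i) ∈ D.Φ ∧ D.form (D.wordProd l (D.α i)) (D.ϖ i) = D.d i := by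
  induction l with
  | nil =>
    refine ⟨by simpa [wordProd] using D.alpha_mem i, ?_⟩
    simp only [wordProd, List.map_nil, List.prod_nil]
    rw [show ((1 : D.V ≃ₗ[ℚ] D.V) (D.α i)) = D.α i from rfl, D.form_alpha_omega]
    simp
  | cons j l ih =>
    have hji : j ≠ i := fun h => hi (h ▸ List.mem_cons_self)
    have hil : i ∉ l := fun h => hi (List.mem_cons_of_mem _ h)
    obtain ⟨hmem, hform⟩ := ih hil
    set β := D.wordProd l (D.α i) with hβ
    have hne : β ≠ D.α j := by
      intro h
      rw [h, D.form_alpha_omega, if_neg hji] at hform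
      have hd := D.d_pos i
      exact absurd hform.symm (by exact_mod_cast hd.ne')
    have h1 : D.s j β ∈ D.Φ := D.s_perm j β hmem hne
    have h2 : D.form (D.s j β) (D.ϖ i) = D.d i := by
      rw [D.form_s_omega hji, hform]
    constructor
    · rw [D.wordProd_cons]
      exact h1
    · rw [D.wordProd_cons]
      exact h2

lemma wordProd_sub_mem_span (l : List D.I) (x : D.V) :
    D.wordProd l x - x ∈ Submodule.span ℚ (D.α '' {j | j ∈ l}) := by
  induction l with
  | nil => simp [wordProd]
  | cons i l ih =>
    rw [D.wordProd_cons]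
    have h1 : D.s i (D.wordProd l x) - D.wordProd l x ∈
        Submodule.span ℚ (D.α '' {j | j ∈ i :: l}) := by
      rw [D.s_apply]
      have : D.α i ∈ D.α '' {j | j ∈ i :: l} := ⟨i, by simp, rfl⟩
      have hmem := Submodule.subset_span (R := ℚ) this
      simpa using Submodule.smul_mem _ (-(D.bas.repr (D.wordProd l x) i : ℚ)) hmem
    have h2 : D.wordProd l x - x ∈ Submodule.span ℚ (D.α '' {j | j ∈ i :: l}) := by
      refine Submodule.span_mono ?_ ih
      refine Set.image_mono ?_
      intro a ha
      exact List.mem_cons_of_mem _ ha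
    have := Submodule.add_mem _ h1 h2
    simpa [mul_assoc] using this

lemma span_form_zero {j : D.I} {s : Set D.I} (hj : j ∉ s) {v : D.V}
    (hv : v ∈ Submodule.span ℚ (D.α '' s)) : D.form v (D.ϖ j) = 0 := by
  induction hv using Submodule.span_induction with
  | mem x hx =>
    obtain ⟨m, hm, rfl⟩ := hx
    rw [D.form_alpha_omega]
    have : m ≠ j := fun h => hj (h ▸ hm)
    simp [this]
  | zero => exact D.form_zero_left _
  | add x y _ _ hx hy => rw [D.form_add, hx, hy, add_zero]
  | smul a x _ hx => rw [D.form_smul, hx, mul_zero]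

lemma fix_word (l : List D.I) (hl : l.Nodup) (x : D.V) (hx : D.wordProd l x = x) :
    ∀ j ∈ l, D.s j x = x := by
  induction l with
  | nil => intro j hj; simp at hj
  | cons i l ih =>
    rw [List.nodup_cons] at hl
    obtain ⟨hil, hln⟩ := hl
    rw [D.wordProd_cons] at hx
    set y := D.wordProd l x with hy
    have hxy : D.s i y = x := hx
    have hyv : y = x + (y - x) := by abel
    have hsub : y - x ∈ Submodule.span ℚ (D.α '' {j | j ∈ l}) := D.wordProd_sub_mem_span l x
    -- s i y = y - r • α i
    have hsiy : D.s i y = y - (D.bas.repr y i : ℚ) • D.α i := D.s_apply i y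
    -- x = y - r • α i, so y - x = r • α i
    have heq : y - x = (D.bas.repr y i : ℚ) • D.α i := by
      have : x = y - (D.bas.repr y i : ℚ) • D.α i := by rw [← hsiy, hxy]
      rw [this]; abel
    -- pair with ϖ i
    have hform0 : D.form (y - x) (D.ϖ i) = 0 := D.span_form_zero (s := {j | j ∈ l}) hil hsub
    have hr : (D.bas.repr y i : ℚ) * D.d i = 0 := by
      rw [heq] at hform0
      rw [D.form_smul, D.form_alpha_omega] at hform0
      simpa using hform0
    have hd : (D.d i : ℚ) ≠ 0 := by
      have := D.d_pos i; exact_mod_cast this.ne'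
    have hr0 : (D.bas.repr y i : ℚ) = 0 := (mul_eq_zero.mp hr).resolve_right hd
    have hyx : y = x := by
      have h0 : y - x = 0 := by rw [heq, hr0, zero_smul]
      exact sub_eq_zero.mp h0
    intro j hj
    rcases List.mem_cons.mp hj with rfl | hjl
    · rw [← hyx, hsiy, hr0, zero_smul, sub_zero]
    · have hwx : D.wordProd l x = x := by rw [← hy]; exact hyx
      exact ih hln hwx j hjl

lemma tau_fix_aux (l : List D.I) (hl : l.Nodup) (hall : ∀ i, i ∈ l) (x : D.V)
    (hx : D.wordProd l x = x) : x = 0 := by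
  have hfix : ∀ j, D.s j x = x := fun j => D.fix_word l hl x hx j (hall j)
  have hrepr : ∀ j, D.bas.repr x j = 0 := by
    intro j
    have := hfix j
    rw [D.s_apply] at this
    have h0 : (D.bas.repr x j : ℚ) • D.α j = 0 := by
      have := sub_eq_self.mp this
      exact this
    have : D.form ((D.bas.repr x j : ℚ) • D.α j) (D.ϖ j) = 0 := by rw [h0]; exact D.form_zero_left _
    rw [D.form_smul, D.form_alpha_omega] at this
    simp only [if_pos rfl] at this
    have hd : (D.d j : ℚ) ≠ 0 := by
      have := D.d_pos j; exact_mod_cast this.ne'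
    exact (mul_eq_zero.mp this).resolve_right hd
  have : D.bas.repr x = 0 := Finsupp.ext hrepr
  exact (LinearEquiv.map_eq_zero_iff D.bas.repr).mp this

lemma wordProd_fixes_omega (l : List D.I) (i : D.I) (h : i ∉ l) :
    D.wordProd l (D.ϖ i) = D.ϖ i := by
  induction l with
  | nil => simp [wordProd]
  | cons j l ih =>
    have hji : j ≠ i := fun hh => h (hh ▸ List.mem_cons_self)
    have hil : i ∉ l := fun hh => h (List.mem_cons_of_mem _ hh)
    rw [D.wordProd_cons]
    show D.s j (D.wordProd l (D.ϖ i)) = D.ϖ i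
    rw [ih hil, D.s_fixes_omega hji]

/-- The inversion set of `w`: positive roots sent to negative roots by `w⁻¹`. -/
def invFinset (w : D.V ≃ₗ[ℚ] D.V) : Finset D.V := D.Φ.filter (fun β => w⁻¹ β ∉ D.Φ)

lemma invFinset_card_le (l : List D.I) :
    (D.invFinset (D.wordProd l)).card ≤ l.length := by
  induction l with
  | nil =>
    have : D.invFinset (D.wordProd []) = ∅ := by
      rw [Finset.eq_empty_iff_forall_notMem]
      intro β hβ
      rw [invFinset, Finset.mem_filter] at hβ
      exact hβ.2 (by simpa [wordProd] using hβ.1)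
    simp [this]
  | cons j l ih =>
    have hsub : D.invFinset (D.wordProd (j :: l)) ⊆
        insert (D.α j) ((D.invFinset (D.wordProd l)).image (D.s j)) := by
      intro β hβ
      rw [invFinset, Finset.mem_filter] at hβ
      obtain ⟨hβΦ, hβinv⟩ := hβ
      rw [D.wordProd_cons] at hβinv
      have hinv : (D.s j * D.wordProd l)⁻¹ β = (D.wordProd l)⁻¹ (D.s j β) := by
        rw [mul_inv_rev, D.s_inv]
        rfl
      rw [hinv] at hβinv
      by_cases hne : β = D.α j
      · rw [hne]
        exact Finset.mem_insert_self _ _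
      · refine Finset.mem_insert_of_mem ?_
        rw [Finset.mem_image]
        refine ⟨D.s j β, ?_, D.s_s_apply j β⟩
        rw [invFinset, Finset.mem_filter]
        exact ⟨D.s_perm j β hβΦ hne, hβinv⟩
    calc (D.invFinset (D.wordProd (j :: l))).card
        ≤ (insert (D.α j) ((D.invFinset (D.wordProd l)).image (D.s j))).card :=
          Finset.card_le_card hsub
      _ ≤ ((D.invFinset (D.wordProd l)).image (D.s j)).card + 1 :=
          Finset.card_insert_le _ _
      _ ≤ (D.invFinset (D.wordProd l)).card + 1 :=
          Nat.add_le_add_right (Finset.card_image_le) 1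
      _ ≤ l.length + 1 := Nat.add_le_add_right ih 1

end SSDatum

/-- Data of a Coxeter element given by a word containing each vertex exactly once. -/
structure CoxData (D : SSDatum) where
  τ : D.V ≃ₗ[ℚ] D.V
  l : List D.I
  nodup : l.Nodup
  covers : ∀ i, i ∈ l
  prod_eq : D.wordProd l = τ

namespace CoxData

variable {D : SSDatum} (cd : CoxData D)

lemma tau_fix (x : D.V) (hx : cd.τ x = x) : x = 0 :=
  D.tau_fix_aux cd.l cd.nodup cd.covers x (by rw [cd.prod_eq]; exact hx)

lemma tau_inv_fix (x : D.V) (hx : cd.τ⁻¹ x = x) : x = 0 := by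
  apply cd.tau_fix
  have h1 : cd.τ (cd.τ⁻¹ x) = x := cd.τ.apply_symm_apply x
  rw [hx] at h1
  exact h1

lemma gam_spec (i : D.I) : ∃ l1 l2 : List D.I,
    cd.l = l1 ++ i :: l2 ∧ i ∉ l1 ∧ i ∉ l2 ∧ D.gam cd.τ i = D.wordProd l1 (D.α i) := by
  obtain ⟨l1, l2, hl⟩ := List.append_of_mem (cd.covers i)
  have hnd := cd.nodup
  rw [hl, List.nodup_append'] at hnd
  obtain ⟨h1, h2, h3⟩ := hnd
  have hi1 : i ∉ l1 := fun h => (h3 h) (List.mem_cons_self)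
  have hi2 : i ∉ l2 := (List.nodup_cons.mp h2).1
  refine ⟨l1, l2, hl, hi1, hi2, ?_⟩
  have hτω : cd.τ (D.ϖ i) = D.ϖ i - D.wordProd l1 (D.α i) := by
    rw [← cd.prod_eq, hl, D.wordProd_append, D.wordProd_cons]
    show D.wordProd l1 (D.s i (D.wordProd l2 (D.ϖ i))) = _
    rw [D.wordProd_fixes_omega l2 i hi2, D.s_omega, if_pos rfl, one_smul, map_sub,
      D.wordProd_fixes_omega l1 i hi1]
  rw [SSDatum.gam, hτω]
  abel

lemma gam_mem (i : D.I) : D.gam cd.τ i ∈ D.Φ := by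
  obtain ⟨l1, l2, hl, hi1, hi2, hg⟩ := cd.gam_spec i
  rw [hg]
  exact (D.chain_pos l1 i hi1).1

lemma gam_inv_not_mem (i : D.I) : cd.τ⁻¹ (D.gam cd.τ i) ∉ D.Φ := by
  obtain ⟨l1, l2, hl, hi1, hi2, hg⟩ := cd.gam_spec i
  have hrev : cd.τ⁻¹ = D.wordProd cd.l.reverse := by
    rw [← cd.prod_eq, D.wordProd_inv]
  have hi2' : i ∉ l2.reverse := fun h => hi2 (List.mem_reverse.mp h)
  have hcalc : cd.τ⁻¹ (D.gam cd.τ i) = - D.wordProd l2.reverse (D.α i) := by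
    rw [hrev, hg, hl]
    have : (l1 ++ i :: l2).reverse = (l2.reverse ++ [i]) ++ l1.reverse := by
      simp
    rw [this, D.wordProd_append, D.wordProd_append, D.wordProd_singleton]
    show (D.wordProd l2.reverse) ((D.s i) ((D.wordProd l1.reverse) (D.wordProd l1 (D.α i)))) = _
    have h1 : (D.wordProd l1.reverse) (D.wordProd l1 (D.α i)) = D.α i := by
      have := congrArg (fun f => f (D.α i)) (D.wordProd_reverse_mul l1)
      simpa using this
    rw [h1, D.s_alpha_self, map_neg]
  rw [hcalc]
  exact D.neg_not_mem (D.chain_pos l2.reverse i hi2').1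

lemma gam_inj : Function.Injective (D.gam cd.τ) := by
  intro i j hij
  rw [SSDatum.gam, SSDatum.gam] at hij
  have hfix : cd.τ (D.ϖ i - D.ϖ j) = D.ϖ i - D.ϖ j := by
    rw [map_sub]
    have h3 : (D.ϖ i - cd.τ (D.ϖ i)) - (D.ϖ j - cd.τ (D.ϖ j)) = 0 := sub_eq_zero.mpr hij
    apply sub_eq_zero.mp
    rw [show cd.τ (D.ϖ i) - cd.τ (D.ϖ j) - (D.ϖ i - D.ϖ j)
        = -((D.ϖ i - cd.τ (D.ϖ i)) - (D.ϖ j - cd.τ (D.ϖ j))) by abel, h3, neg_zero]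
  have h0 := cd.tau_fix _ hfix
  have : D.ϖ i = D.ϖ j := by
    have := sub_eq_zero.mp h0
    exact this
  have hb : D.bas i = D.bas j := by rw [D.bas_eq, D.bas_eq, this]
  exact D.bas.injective hb

lemma gam_mem_invFinset (i : D.I) : D.gam cd.τ i ∈ D.invFinset cd.τ := by
  rw [SSDatum.invFinset, Finset.mem_filter]
  exact ⟨cd.gam_mem i, cd.gam_inv_not_mem i⟩

lemma length_l : cd.l.length = Fintype.card D.I := by
  rw [← List.toFinset_card_of_nodup cd.nodup]
  congr 1
  apply Finset.eq_univ_iff_forall.mpr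
  intro i
  rw [List.mem_toFinset]
  exact cd.covers i

lemma invFinset_eq : D.invFinset cd.τ = Finset.univ.image (D.gam cd.τ) := by
  symm
  apply Finset.eq_of_subset_of_card_le
  · intro β hβ
    rw [Finset.mem_image] at hβ
    obtain ⟨i, _, rfl⟩ := hβ
    exact cd.gam_mem_invFinset i
  · calc (D.invFinset cd.τ).card ≤ cd.l.length := by
          rw [← cd.prod_eq]; exact D.invFinset_card_le cd.l
      _ = Fintype.card D.I := cd.length_l
      _ = (Finset.univ.image (D.gam cd.τ)).card := by
          rw [Finset.card_image_of_injective _ cd.gam_inj, Finset.card_univ]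

end CoxData

namespace SSDatum

variable (D : SSDatum)

/-- The set `Φ⁺ × ℤ` as a subtype. -/
abbrev PS := {x : D.V × ℤ // x.1 ∈ D.Φ}

lemma no_pos_orbit (u : D.V ≃ₗ[ℚ] D.V) (hufix : ∀ x, u x = x → x = 0) (y : D.V)
    (hy : ∀ j : ℕ, (u ^ j) y ∈ D.Φ) : False := by
  classical
  have key2 : ∀ (p : ℕ), 0 < p → ∀ z : D.V, (∀ j : ℕ, (u ^ j) z ∈ D.Φ) →
      (u ^ p) z = z → False := by
    intro p hp0 z hz1 hper
    have h00 : (u ^ 0) z = z := by rw [pow_zero]; rfl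
    have hzΦ : z ∈ D.Φ := h00 ▸ hz1 0
    have huv : u (∑ k ∈ Finset.range p, (u ^ k) z) = ∑ k ∈ Finset.range p, (u ^ k) z := by
      have hA : ∑ k ∈ Finset.range (p+1), (u ^ k) z
          = (∑ k ∈ Finset.range p, (u ^ k) z) + z := by
        rw [Finset.sum_range_succ, hper]
      have hmap : ∑ k ∈ Finset.range p, (u ^ (k+1)) z
          = u (∑ k ∈ Finset.range p, (u ^ k) z) := by
        rw [map_sum]
        refine Finset.sum_congr rfl fun k _ => ?_
        rw [pow_succ']
        rfl
      have hA' : ∑ k ∈ Finset.range (p+1), (u ^ k) z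
          = u (∑ k ∈ Finset.range p, (u ^ k) z) + z := by
        rw [Finset.sum_range_succ', hmap, h00]
      exact add_right_cancel (hA'.symm.trans hA)
    have hv0 := hufix _ huv
    have hz0 : z = 0 := by
      apply D.eq_zero_of_coef hzΦ
      intro m
      have hsum : ∑ k ∈ Finset.range p, D.form ((u ^ k) z) (D.ϖ m) = 0 := by
        rw [← D.form_sum_left, hv0]
        exact D.form_zero_left _
      have hterm := (Finset.sum_eq_zero_iff_of_nonneg
        (fun k _ => D.coef_nonneg (hz1 k) m)).mp hsum
      have h0 := hterm 0 (Finset.mem_range.mpr hp0)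
      rw [h00] at h0
      exact h0
    exact D.mem_ne_zero hzΦ hz0
  have happly : ∀ (a j : ℕ), (u ^ j) ((u ^ a) y) = (u ^ (j + a)) y := by
    intro a j
    rw [pow_add]
    rfl
  have key : ∀ a b : ℕ, a < b → (u ^ a) y = (u ^ b) y → False := by
    intro a b hab heq
    refine key2 (b - a) (Nat.sub_pos_of_lt hab) ((u ^ a) y)
      (fun j => by rw [happly]; exact hy _) ?_
    rw [happly]
    have hba : (b - a) + a = b := by omega
    rw [hba, ← heq]
  obtain ⟨a, b, hab, heq⟩ := Finite.exists_ne_map_eq_of_infinite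
    (fun j : ℕ => (⟨(u ^ j) y, hy j⟩ : {v // v ∈ D.Φ}))
  have heq' : (u ^ a) y = (u ^ b) y := congrArg Subtype.val heq
  rcases lt_or_gt_of_ne hab with h | h
  · exact key a b h heq'
  · exact key b a h heq'.symm

end SSDatum

namespace CoxData

variable {D : SSDatum} (cd : CoxData D)

lemma tau_root {β : D.V} (hβ : D.IsRootV β) : D.IsRootV (cd.τ β) := by
  rw [← cd.prod_eq]
  exact D.wordProd_root cd.l hβ

lemma tau_inv_root {β : D.V} (hβ : D.IsRootV β) : D.IsRootV (cd.τ⁻¹ β) := by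
  have h : cd.τ⁻¹ = D.wordProd cd.l.reverse := by rw [← cd.prod_eq, D.wordProd_inv]
  rw [h]
  exact D.wordProd_root _ hβ

lemma hat_pos {x : D.V × ℤ} (h : cd.τ x.1 ∈ D.Φ) :
    D.hat cd.τ x = (cd.τ x.1, x.2) := if_pos h

lemma hat_neg {x : D.V × ℤ} (h : cd.τ x.1 ∉ D.Φ) :
    D.hat cd.τ x = (-(cd.τ x.1), x.2 - 1) := if_neg h

lemma hatInv_pos {x : D.V × ℤ} (h : cd.τ⁻¹ x.1 ∈ D.Φ) :
    D.hatInv cd.τ x = (cd.τ⁻¹ x.1, x.2) := if_pos h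

lemma hatInv_neg {x : D.V × ℤ} (h : cd.τ⁻¹ x.1 ∉ D.Φ) :
    D.hatInv cd.τ x = (-(cd.τ⁻¹ x.1), x.2 + 1) := if_neg h

lemma hat_mem {x : D.V × ℤ} (hx : x.1 ∈ D.Φ) : (D.hat cd.τ x).1 ∈ D.Φ := by
  by_cases h : cd.τ x.1 ∈ D.Φ
  · rw [cd.hat_pos h]; exact h
  · rw [cd.hat_neg h]
    rcases cd.tau_root (Or.inl hx) with h' | h'
    · exact absurd h' h
    · exact h'

lemma hatInv_mem {x : D.V × ℤ} (hx : x.1 ∈ D.Φ) : (D.hatInv cd.τ x).1 ∈ D.Φ := by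
  by_cases h : cd.τ⁻¹ x.1 ∈ D.Φ
  · rw [cd.hatInv_pos h]; exact h
  · rw [cd.hatInv_neg h]
    rcases cd.tau_inv_root (Or.inl hx) with h' | h'
    · exact absurd h' h
    · exact h'

lemma tau_inv_tau (v : D.V) : cd.τ⁻¹ (cd.τ v) = v := cd.τ.symm_apply_apply v

lemma tau_tau_inv (v : D.V) : cd.τ (cd.τ⁻¹ v) = v := cd.τ.apply_symm_apply v

lemma hatInv_hat {x : D.V × ℤ} (hx : x.1 ∈ D.Φ) : D.hatInv cd.τ (D.hat cd.τ x) = x := by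
  by_cases h : cd.τ x.1 ∈ D.Φ
  · rw [cd.hat_pos h, cd.hatInv_pos (by simpa [cd.tau_inv_tau] using hx)]
    simp [cd.tau_inv_tau]
  · rw [cd.hat_neg h]
    have h1 : cd.τ⁻¹ ((-(cd.τ x.1), x.2 - 1).1 : D.V) = -x.1 := by
      simp [map_neg, cd.tau_inv_tau]
    rw [cd.hatInv_neg (by rw [h1]; exact D.neg_not_mem hx)]
    rw [h1]
    simp

lemma hat_hatInv {x : D.V × ℤ} (hx : x.1 ∈ D.Φ) : D.hat cd.τ (D.hatInv cd.τ x) = x := by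
  by_cases h : cd.τ⁻¹ x.1 ∈ D.Φ
  · rw [cd.hatInv_pos h, cd.hat_pos (by simpa [cd.tau_tau_inv] using hx)]
    simp [cd.tau_tau_inv]
  · rw [cd.hatInv_neg h]
    have h1 : cd.τ ((-(cd.τ⁻¹ x.1), x.2 + 1).1 : D.V) = -x.1 := by
      simp [map_neg, cd.tau_tau_inv]
    rw [cd.hat_neg (by rw [h1]; exact D.neg_not_mem hx)]
    rw [h1]
    simp

/-- The permutation of `Φ⁺ × ℤ` induced by `τ̂`. -/
def ee : Equiv.Perm D.PS where
  toFun x := ⟨D.hat cd.τ x.val, cd.hat_mem x.prop⟩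
  invFun x := ⟨D.hatInv cd.τ x.val, cd.hatInv_mem x.prop⟩
  left_inv x := Subtype.ext (cd.hatInv_hat x.prop)
  right_inv x := Subtype.ext (cd.hat_hatInv x.prop)

lemma ee_apply (x : D.PS) : (cd.ee x).val = D.hat cd.τ x.val := rfl

lemma ee_inv_apply (x : D.PS) : (cd.ee⁻¹ x).val = D.hatInv cd.τ x.val := rfl

lemma ee_snd (x : D.PS) :
    ((cd.ee x).val.2 = x.val.2 ∧ cd.τ x.val.1 ∈ D.Φ) ∨
    ((cd.ee x).val.2 = x.val.2 - 1 ∧ cd.τ x.val.1 ∉ D.Φ) := by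
  by_cases h : cd.τ x.val.1 ∈ D.Φ
  · left; exact ⟨by rw [cd.ee_apply, cd.hat_pos h], h⟩
  · right; exact ⟨by rw [cd.ee_apply, cd.hat_neg h], h⟩

lemma ee_inv_snd (x : D.PS) :
    ((cd.ee⁻¹ x).val.2 = x.val.2 ∧ cd.τ⁻¹ x.val.1 ∈ D.Φ) ∨
    ((cd.ee⁻¹ x).val.2 = x.val.2 + 1 ∧ cd.τ⁻¹ x.val.1 ∉ D.Φ) := by
  by_cases h : cd.τ⁻¹ x.val.1 ∈ D.Φ
  · left; exact ⟨by rw [cd.ee_inv_apply, cd.hatInv_pos h], h⟩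
  · right; exact ⟨by rw [cd.ee_inv_apply, cd.hatInv_neg h], h⟩

lemma ee_fst_pos {x : D.PS} (h : cd.τ x.val.1 ∈ D.Φ) :
    (cd.ee x).val.1 = cd.τ x.val.1 := by
  rw [cd.ee_apply, cd.hat_pos h]

lemma ee_inv_fst_pos {x : D.PS} (h : cd.τ⁻¹ x.val.1 ∈ D.Φ) :
    (cd.ee⁻¹ x).val.1 = cd.τ⁻¹ x.val.1 := by
  rw [cd.ee_inv_apply, cd.hatInv_pos h]

lemma ee_fst_mem_invFinset {x : D.PS} (h : cd.τ x.val.1 ∉ D.Φ) :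
    (cd.ee x).val.1 ∈ D.invFinset cd.τ := by
  have h1 : (cd.ee x).val.1 = -(cd.τ x.val.1) := by rw [cd.ee_apply, cd.hat_neg h]
  rw [SSDatum.invFinset, Finset.mem_filter]
  constructor
  · exact cd.hat_mem x.prop
  · rw [h1, map_neg, cd.tau_inv_tau]
    exact D.neg_not_mem x.prop

lemma ee_fst_not_mem_invFinset {x : D.PS} (h : cd.τ x.val.1 ∈ D.Φ) :
    (cd.ee x).val.1 ∉ D.invFinset cd.τ := by
  have h1 : (cd.ee x).val.1 = cd.τ x.val.1 := cd.ee_fst_pos h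
  rw [SSDatum.invFinset, Finset.mem_filter, h1]
  intro hc
  exact hc.2 (by rw [cd.tau_inv_tau]; exact x.prop)

lemma pow_succ_apply (m : ℕ) (x : D.PS) :
    (cd.ee ^ (m + 1)) x = cd.ee ((cd.ee ^ m) x) := by
  rw [pow_succ']
  rfl

lemma inv_pow_succ_apply (m : ℕ) (x : D.PS) :
    (cd.ee⁻¹ ^ (m + 1)) x = cd.ee⁻¹ ((cd.ee⁻¹ ^ m) x) := by
  rw [pow_succ']
  rfl

lemma exists_drop (x : D.PS) : ∃ m : ℕ, ((cd.ee ^ m) x).val.2 < x.val.2 := by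
  by_contra hcon
  push_neg at hcon
  have hdec : ∀ m : ℕ, ((cd.ee ^ (m+1)) x).val.2 ≤ ((cd.ee ^ m) x).val.2 := by
    intro m
    rw [cd.pow_succ_apply]
    rcases cd.ee_snd ((cd.ee ^ m) x) with ⟨h, _⟩ | ⟨h, _⟩ <;> omega
  have hle : ∀ m : ℕ, ((cd.ee ^ m) x).val.2 ≤ x.val.2 := by
    intro m
    induction m with
    | zero => simp
    | succ k ih => exact le_trans (hdec k) ih
  have heq2 : ∀ m : ℕ, ((cd.ee ^ m) x).val.2 = x.val.2 :=
    fun m => le_antisymm (hle m) (hcon m)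
  have hfst : ∀ m : ℕ, ((cd.ee ^ m) x).val.1 = (cd.τ ^ m) x.val.1 := by
    intro m
    induction m with
    | zero => simp
    | succ k ih =>
      rcases cd.ee_snd ((cd.ee ^ k) x) with ⟨h, hmem⟩ | ⟨h, hmem⟩
      · rw [cd.pow_succ_apply, cd.ee_fst_pos hmem, ih, pow_succ']
        rfl
      · exfalso
        rw [← cd.pow_succ_apply] at h
        rw [heq2, heq2] at h
        omega
  exact D.no_pos_orbit cd.τ cd.tau_fix x.val.1
    (fun j => by rw [← hfst j]; exact ((cd.ee ^ j) x).prop)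

lemma exists_rise (x : D.PS) : ∃ m : ℕ, x.val.2 < ((cd.ee⁻¹ ^ m) x).val.2 := by
  by_contra hcon
  push_neg at hcon
  have hdec : ∀ m : ℕ, ((cd.ee⁻¹ ^ m) x).val.2 ≤ ((cd.ee⁻¹ ^ (m+1)) x).val.2 := by
    intro m
    rw [cd.inv_pow_succ_apply]
    rcases cd.ee_inv_snd ((cd.ee⁻¹ ^ m) x) with ⟨h, _⟩ | ⟨h, _⟩ <;> omega
  have hle : ∀ m : ℕ, x.val.2 ≤ ((cd.ee⁻¹ ^ m) x).val.2 := by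
    intro m
    induction m with
    | zero => simp
    | succ k ih => exact le_trans ih (hdec k)
  have heq2 : ∀ m : ℕ, ((cd.ee⁻¹ ^ m) x).val.2 = x.val.2 :=
    fun m => le_antisymm (hcon m) (hle m)
  have hfst : ∀ m : ℕ, ((cd.ee⁻¹ ^ m) x).val.1 = (cd.τ⁻¹ ^ m) x.val.1 := by
    intro m
    induction m with
    | zero => simp
    | succ k ih =>
      rcases cd.ee_inv_snd ((cd.ee⁻¹ ^ k) x) with ⟨h, hmem⟩ | ⟨h, hmem⟩
      · rw [cd.inv_pow_succ_apply, cd.ee_inv_fst_pos hmem, ih, pow_succ']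
        rfl
      · exfalso
        rw [← cd.inv_pow_succ_apply] at h
        rw [heq2, heq2] at h
        omega
  exact D.no_pos_orbit cd.τ⁻¹ cd.tau_inv_fix x.val.1
    (fun j => by rw [← hfst j]; exact ((cd.ee⁻¹ ^ j) x).prop)

lemma reach_below (n : ℕ) (x : D.PS) :
    ∃ m : ℕ, ((cd.ee ^ m) x).val.2 ≤ x.val.2 - n := by
  induction n with
  | zero => exact ⟨0, by simp⟩
  | succ k ih =>
    obtain ⟨m, hm⟩ := ih
    obtain ⟨m', hm'⟩ := cd.exists_drop ((cd.ee ^ m) x)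
    refine ⟨m' + m, ?_⟩
    have hcomp : (cd.ee ^ (m' + m)) x = (cd.ee ^ m') ((cd.ee ^ m) x) := by
      rw [pow_add]
      rfl
    rw [hcomp]
    omega

lemma reach_above (n : ℕ) (x : D.PS) :
    ∃ m : ℕ, x.val.2 + n ≤ ((cd.ee⁻¹ ^ m) x).val.2 := by
  induction n with
  | zero => exact ⟨0, by simp⟩
  | succ k ih =>
    obtain ⟨m, hm⟩ := ih
    obtain ⟨m', hm'⟩ := cd.exists_rise ((cd.ee⁻¹ ^ m) x)
    refine ⟨m' + m, ?_⟩
    have hcomp : (cd.ee⁻¹ ^ (m' + m)) x = (cd.ee⁻¹ ^ m') ((cd.ee⁻¹ ^ m) x) := by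
      rw [pow_add]
      rfl
    rw [hcomp]
    omega

/-- The base point `(γ_i, 0)`. -/
def base (i : D.I) : D.PS := ⟨(D.gam cd.τ i, 0), cd.gam_mem i⟩

lemma zpow_succ_apply (k : ℤ) (x : D.PS) :
    (cd.ee ^ (k + 1)) x = cd.ee ((cd.ee ^ k) x) := by
  rw [add_comm, zpow_add, zpow_one]
  rfl

lemma zpow_antitone (x : D.PS) : Antitone (fun k : ℤ => ((cd.ee ^ k) x).val.2) := by
  apply antitone_int_of_succ_le
  intro k
  show ((cd.ee ^ (k + 1)) x).val.2 ≤ ((cd.ee ^ k) x).val.2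
  rw [cd.zpow_succ_apply]
  rcases cd.ee_snd ((cd.ee ^ k) x) with ⟨h, _⟩ | ⟨h, _⟩ <;> omega

lemma core (i j : D.I) (p : ℕ) (h : (cd.ee ^ (p : ℤ)) (cd.base j) = cd.base i) :
    i = j ∧ p = 0 := by
  cases p with
  | zero =>
    refine ⟨?_, rfl⟩
    rw [Nat.cast_zero, zpow_zero] at h
    have h2 : (cd.base j).val = (cd.base i).val := by rw [← h]; rfl
    have h3 : D.gam cd.τ j = D.gam cd.τ i := congrArg Prod.fst h2
    exact (cd.gam_inj h3).symm
  | succ q =>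
    exfalso
    set y := cd.base j with hy
    set F : ℤ → ℤ := fun k => ((cd.ee ^ k) y).val.2 with hF
    have hanti : Antitone F := cd.zpow_antitone y
    have hF0 : F 0 = 0 := by
      show ((cd.ee ^ (0:ℤ)) y).val.2 = 0
      rw [zpow_zero]
      rfl
    have hFp : F ((q : ℤ) + 1) = 0 := by
      show ((cd.ee ^ ((q:ℤ) + 1)) y).val.2 = 0
      have hc : ((q : ℤ) + 1) = ((q + 1 : ℕ) : ℤ) := by omega
      rw [hc, h]
      rfl
    have hFq : F (q : ℤ) = 0 := by
      have h1 : F (q : ℤ) ≤ F 0 := hanti (by positivity)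
      have h2 : F ((q:ℤ) + 1) ≤ F (q : ℤ) := hanti (by omega)
      omega
    have hstep : cd.ee ((cd.ee ^ (q : ℤ)) y) = (cd.ee ^ ((q : ℤ) + 1)) y :=
      (cd.zpow_succ_apply (q : ℤ) y).symm
    rcases cd.ee_snd ((cd.ee ^ (q : ℤ)) y) with ⟨h2, hmem⟩ | ⟨h2, hmem⟩
    · have h3 := cd.ee_fst_not_mem_invFinset hmem
      rw [hstep] at h3
      have h4 : ((q : ℕ) + 1 : ℤ) = ((q + 1 : ℕ) : ℤ) := by omega
      rw [h4, h] at h3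
      exact h3 (cd.gam_mem_invFinset i)
    · have h5 : F ((q:ℤ)+1) = F (q:ℤ) - 1 := by
        show ((cd.ee ^ ((q:ℤ)+1)) y).val.2 = ((cd.ee ^ (q:ℤ)) y).val.2 - 1
        rw [← hstep]
        exact h2
      omega

lemma psi_inj {i j : D.I} {k m : ℤ}
    (h : (cd.ee ^ k) (cd.base i) = (cd.ee ^ m) (cd.base j)) : i = j ∧ k = m := by
  have main : ∀ (i j : D.I) (k m : ℤ), k ≤ m →
      (cd.ee ^ k) (cd.base i) = (cd.ee ^ m) (cd.base j) → i = j ∧ k = m := by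
    intro i j k m hkm h
    have h2 : (cd.ee ^ (m - k)) (cd.base j) = cd.base i := by
      have h3 := congrArg (fun z => (cd.ee ^ (-k)) z) h
      have h4 : (cd.ee ^ (-k)) ((cd.ee ^ k) (cd.base i)) = cd.base i := by
        have : (cd.ee ^ (-k)) ((cd.ee ^ k) (cd.base i)) = (cd.ee ^ (-k + k)) (cd.base i) := by
          rw [zpow_add]
          rfl
        rw [this]
        simp
      have h5 : (cd.ee ^ (-k)) ((cd.ee ^ m) (cd.base j)) = (cd.ee ^ (m - k)) (cd.base j) := by
        have : (cd.ee ^ (-k)) ((cd.ee ^ m) (cd.base j)) = (cd.ee ^ (-k + m)) (cd.base j) := by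
          rw [zpow_add]
          rfl
        rw [this]
        congr 1
        ring
      rw [h4, h5] at h3
      exact h3.symm
    have hnn : (((m - k).toNat : ℤ)) = m - k := Int.toNat_of_nonneg (by omega)
    obtain ⟨hij, hp⟩ := cd.core i j (m - k).toNat (by rw [hnn]; exact h2)
    constructor
    · exact hij
    · omega
  rcases le_total k m with hkm | hkm
  · exact main i j k m hkm h
  · obtain ⟨hij, hm⟩ := main j i m k hkm h.symm
    exact ⟨hij.symm, hm.symm⟩

lemma psi_surj (x : D.PS) : ∃ (i : D.I) (k : ℤ), (cd.ee ^ k) (cd.base i) = x := by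
  classical
  set F : ℤ → ℤ := fun k => ((cd.ee ^ k) x).val.2 with hF
  have hanti : Antitone F := cd.zpow_antitone x
  -- there is k with 1 ≤ F k
  have hup : ∃ k : ℤ, 1 ≤ F k := by
    obtain ⟨m, hm⟩ := cd.reach_above (1 - x.val.2).toNat x
    refine ⟨-(m : ℤ), ?_⟩
    have hcast : cd.ee ^ (-(m : ℤ)) = cd.ee⁻¹ ^ m := by
      rw [zpow_neg, zpow_natCast, inv_pow]
    show 1 ≤ ((cd.ee ^ (-(m:ℤ))) x).val.2
    rw [hcast]
    have : x.val.2 + ((1 - x.val.2).toNat : ℤ) ≥ 1 := by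
      rcases le_or_gt x.val.2 1 with hc | hc
      · rw [Int.toNat_of_nonneg (by omega)]; omega
      · have : (1 - x.val.2).toNat = 0 := by omega
        rw [this]; omega
    omega
  -- there is k0 with F k0 ≤ 0
  have hdown : ∃ k : ℤ, F k ≤ 0 := by
    obtain ⟨m, hm⟩ := cd.reach_below x.val.2.toNat x
    refine ⟨(m : ℤ), ?_⟩
    have hcast : cd.ee ^ ((m : ℤ)) = cd.ee ^ m := zpow_natCast _ _
    show ((cd.ee ^ ((m:ℤ))) x).val.2 ≤ 0
    rw [hcast]
    have : x.val.2 - (x.val.2.toNat : ℤ) ≤ 0 := by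
      rcases le_or_gt 0 x.val.2 with hc | hc
      · rw [Int.toNat_of_nonneg hc]; omega
      · have : x.val.2.toNat = 0 := by omega
        rw [this]; omega
    omega
  obtain ⟨k0, hk0⟩ := hdown
  have hbdd : ∃ b : ℤ, ∀ z, 1 ≤ F z → z ≤ b := by
    refine ⟨k0, fun z hz => ?_⟩
    by_contra hc
    push_neg at hc
    have := hanti hc.le
    omega
  obtain ⟨M, hM, hMmax⟩ := Int.exists_greatest_of_bdd
    (P := fun k => 1 ≤ F k) (by obtain ⟨b, hb⟩ := hbdd; exact ⟨b, hb⟩) hup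
  have hM1 : F (M + 1) ≤ 0 := by
    by_contra hc
    push_neg at hc
    have := hMmax (M + 1) (by omega)
    omega
  have hstep : cd.ee ((cd.ee ^ M) x) = (cd.ee ^ (M + 1)) x := (cd.zpow_succ_apply M x).symm
  rcases cd.ee_snd ((cd.ee ^ M) x) with ⟨h2, hmem⟩ | ⟨h2, hmem⟩
  · exfalso
    have hne : F (M + 1) = F M := by
      show ((cd.ee ^ (M+1)) x).val.2 = ((cd.ee ^ M) x).val.2
      rw [← hstep]
      exact h2
    omega
  · -- drop into level 0
    have hFM1 : F (M + 1) = F M - 1 := by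
      show ((cd.ee ^ (M+1)) x).val.2 = ((cd.ee ^ M) x).val.2 - 1
      rw [← hstep]
      exact h2
    have hFM : F M = 1 := by omega
    have hsnd : ((cd.ee ^ (M+1)) x).val.2 = 0 := by
      have : F (M+1) = 0 := by omega
      exact this
    have hfst : ((cd.ee ^ (M+1)) x).val.1 ∈ D.invFinset cd.τ := by
      rw [← hstep]
      exact cd.ee_fst_mem_invFinset hmem
    rw [cd.invFinset_eq, Finset.mem_image] at hfst
    obtain ⟨i, -, hi⟩ := hfst
    refine ⟨i, -(M+1), ?_⟩
    have hbase : (cd.ee ^ (M+1)) x = cd.base i := by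
      apply Subtype.ext
      apply Prod.ext
      · exact hi.symm
      · exact hsnd
    rw [zpow_neg, ← hbase]
    exact Equiv.symm_apply_apply _ _

lemma iter_hat (m : ℕ) (x : D.PS) :
    (D.hat cd.τ)^[m] x.val = ((cd.ee ^ m) x).val := by
  induction m with
  | zero => simp
  | succ k ih =>
    rw [Function.iterate_succ_apply', ih, cd.pow_succ_apply]
    rfl

lemma iter_hatInv (m : ℕ) (x : D.PS) :
    (D.hatInv cd.τ)^[m] x.val = ((cd.ee⁻¹ ^ m) x).val := by
  induction m with
  | zero => simp
  | succ k ih =>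
    rw [Function.iterate_succ_apply', ih, cd.inv_pow_succ_apply]
    rfl

end CoxData

/-- For any Dynkin quiver `Q` on `Δ`, the map
`φ_Q : Δ̂₀ → Φ⁺ × ℤ` is a bijection. -/
theorem stmt4 (D : SSDatum) (ξ : D.I → ℤ) (hξ : D.IsHeight ξ)
    (τ : D.V ≃ₗ[ℚ] D.V) (hτ : D.IsCoxeterFor ξ τ) :
    Set.BijOn (fun x : D.I × ℤ => D.phi ξ τ x.1 x.2)
      {x : D.I × ℤ | 2 ∣ (x.2 - ξ x.1)}
      {y : D.V × ℤ | y.1 ∈ D.Φ} := by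
  classical
  obtain ⟨l, hnd, hall, -, hwτ⟩ := hτ
  set cd : CoxData D := ⟨τ, l, hnd, hall, hwτ⟩ with hcd
  have hτeq : cd.τ = τ := by rw [hcd]
  -- Description of `phi` via integer powers of the permutation `cd.ee`.
  have phi_eq : ∀ (i : D.I) (t p : ℤ), p - ξ i = 2 * t →
      D.phi ξ τ i p = ((cd.ee ^ (-t)) (cd.base i)).val := by
    intro i t p hpt
    rw [← hτeq]
    by_cases hp : p ≤ ξ i
    · unfold SSDatum.phi
      rw [if_pos hp]
      have h1 : ξ i - p = 2 * (-t) := by omega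
      rw [h1, Int.mul_ediv_cancel_left _ (by norm_num : (2:ℤ) ≠ 0)]
      have hbase : (D.gam cd.τ i, (0:ℤ)) = (cd.base i).val := rfl
      rw [hbase, cd.iter_hat]
      have hpw : (cd.ee ^ ((-t).toNat) : Equiv.Perm D.PS) = cd.ee ^ (-t) := by
        rw [← zpow_natCast, Int.toNat_of_nonneg (by omega : (0:ℤ) ≤ -t)]
      rw [hpw]
    · unfold SSDatum.phi
      rw [if_neg hp]
      have h1 : p - ξ i = 2 * t := hpt
      rw [h1, Int.mul_ediv_cancel_left _ (by norm_num : (2:ℤ) ≠ 0)]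
      have hbase : (D.gam cd.τ i, (0:ℤ)) = (cd.base i).val := rfl
      rw [hbase, cd.iter_hatInv]
      have hpw : (cd.ee⁻¹ ^ (t.toNat) : Equiv.Perm D.PS) = cd.ee ^ (-t) := by
        rw [inv_pow, ← zpow_natCast, Int.toNat_of_nonneg (by omega : (0:ℤ) ≤ t), ← zpow_neg]
      rw [hpw]
  refine ⟨?_, ?_, ?_⟩
  · -- maps to
    intro x hx
    obtain ⟨t, ht⟩ := hx
    show (D.phi ξ τ x.1 x.2).1 ∈ D.Φ
    rw [phi_eq x.1 t x.2 ht]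
    exact ((cd.ee ^ (-t)) (cd.base x.1)).prop
  · -- injective
    intro x hx y hy hxy
    obtain ⟨t, ht⟩ := hx
    obtain ⟨u, hu⟩ := hy
    simp only at hxy
    rw [phi_eq x.1 t x.2 ht, phi_eq y.1 u y.2 hu] at hxy
    obtain ⟨hij, htu⟩ := cd.psi_inj (Subtype.ext hxy)
    have h2 : x.2 = y.2 := by
      rw [hij] at ht
      omega
    exact Prod.ext hij h2
  · -- surjective
    intro y hy
    obtain ⟨i, k, hik⟩ := cd.psi_surj ⟨y, hy⟩
    refine ⟨(i, ξ i - 2 * k), ?_, ?_⟩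
    · show 2 ∣ (ξ i - 2 * k - ξ i)
      exact ⟨-k, by ring⟩
    · show D.phi ξ τ i (ξ i - 2 * k) = y
      rw [phi_eq i (-k) _ (by ring), neg_neg, hik]
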